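/- Let f : [α, t₀) → ℝ and s : [α, t₀) → ℝ be differentiable with f' + f² + 1 = 0 and s' + s² + r = 0 where r ≥ 1 is continuous, and suppose lim_{t→t₀⁻} (f(t) - s(t)) = 0 and f(t) = cot(t - c) for some c ∈ (0, α). Then s(α) ≥ f(α) > cot(α). -/

import Mathlib

open Real Set Filter MeasureTheory intervalIntegral

lemma cot_lt_cot_aux {x y : ℝ} (hx : 0 < x) (hxy : x < y) (hy : y < π) :
    Real.cot y < Real.cot x := by
  have sx : 0 < Real.sin x := Real.sin_pos_of_pos_of_lt_pi hx (hxy.trans hy)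
  have sy : 0 < Real.sin y := Real.sin_pos_of_pos_of_lt_pi (hx.trans hxy) hy
  have hs : 0 < Real.sin (y - x) :=
    Real.sin_pos_of_pos_of_lt_pi (by linarith) (by linarith)
  rw [Real.cot_eq_cos_div_sin, Real.cot_eq_cos_div_sin, div_lt_div_iff₀ sy sx]
  nlinarith [Real.sin_sub y x]


/-- If `f t = cot (t - c)` with `c ∈ (0, α)` solves `f' + f² + 1 = 0` on `[α, t₀)`,
`s` solves `s' + s² + r = 0` there with `r ≥ 1` continuous, and `f - s → 0` as `t → t₀⁻`,
then `s α ≥ f α > cot α`. -/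
theorem stmt_16 (α t₀ c : ℝ) (hα : 0 < α) (hαt₀ : α < t₀) (ht₀ : t₀ ≤ π)
    (hc : c ∈ Set.Ioo 0 α) (f s r : ℝ → ℝ)
    (hf : ∀ t ∈ Set.Ico α t₀, HasDerivWithinAt f (-(f t ^ 2 + 1)) (Set.Ico α t₀) t)
    (hs : ∀ t ∈ Set.Ico α t₀, HasDerivWithinAt s (-(s t ^ 2 + r t)) (Set.Ico α t₀) t)
    (hrc : ContinuousOn r (Set.Ico α t₀))
    (hr : ∀ t ∈ Set.Ico α t₀, 1 ≤ r t)
    (hfc : ∀ t ∈ Set.Ico α t₀, f t = Real.cot (t - c))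
    (hlim : Filter.Tendsto (fun t => f t - s t) (nhdsWithin t₀ (Set.Iio t₀)) (nhds 0)) :
    f α ≤ s α ∧ Real.cot α < f α := by
  have hαI : α ∈ Set.Ico α t₀ := ⟨le_refl _, hαt₀⟩
  constructor
  · -- comparison part
    by_contra hcon
    push_neg at hcon
    set I : Set ℝ := Set.Ico α t₀ with hI
    set g : ℝ → ℝ := fun t => f t - s t with hgdef
    have hgα : 0 < g α := sub_pos.mpr hcon
    have hg : ∀ t ∈ I, HasDerivWithinAt g (-(f t + s t) * g t + (r t - 1)) I t := by
      intro t ht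
      have := (hf t ht).sub (hs t ht)
      refine this.congr_deriv ?_
      simp only [hgdef]; ring
    have hfcont : ContinuousOn f I := fun t ht => (hf t ht).continuousWithinAt
    have hscont : ContinuousOn s I := fun t ht => (hs t ht).continuousWithinAt
    have hgcont : ContinuousOn g I := hfcont.sub hscont
    set b : ℝ → ℝ := fun t => f t + s t with hbdef
    have hbcont : ContinuousOn b I := hfcont.add hscont
    -- bound on f via cot
    have hsin : ∀ t ∈ Set.Icc α t₀, Real.sin (t - c) ≠ 0 := by
      intro t ht
      exact (Real.sin_pos_of_pos_of_lt_pi (by linarith [hc.2, ht.1])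
        (by linarith [hc.1, ht.2])).ne'
    have hcotcont : ContinuousOn (fun t => Real.cot (t - c)) (Set.Icc α t₀) := by
      have : ∀ t ∈ Set.Icc α t₀, Real.cot (t - c)
          = Real.cos (t - c) / Real.sin (t - c) := fun t _ => Real.cot_eq_cos_div_sin _
      refine ContinuousOn.congr ?_ this
      exact ((Real.continuous_cos.comp (continuous_id.sub continuous_const)).continuousOn).div
        ((Real.continuous_sin.comp (continuous_id.sub continuous_const)).continuousOn) hsin
    obtain ⟨M₁, hM₁⟩ := (isCompact_Icc).exists_bound_of_continuousOn hcotcont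
    have hfbd : ∀ t ∈ I, |f t| ≤ M₁ := by
      intro t ht
      rw [hfc t ht]
      exact hM₁ t ⟨ht.1, ht.2.le⟩
    -- eventually |g| < 1 near t₀
    have hev : ∀ᶠ t in nhdsWithin t₀ (Set.Iio t₀), |g t| < 1 := by
      have := hlim (Metric.ball_mem_nhds 0 one_pos)
      filter_upwards [this] with t ht
      simpa [Real.dist_eq] using ht
    obtain ⟨t₁, ht₁, hsub⟩ := (mem_nhdsLT_iff_exists_Ioo_subset' hαt₀).mp hev
    set t₂ : ℝ := max t₁ α with ht₂def
    have ht₂ : t₂ < t₀ := max_lt ht₁ hαt₀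
    obtain ⟨M₂, hM₂⟩ := (isCompact_Icc (a := α) (b := t₂)).exists_bound_of_continuousOn
      (hscont.mono (fun x hx => ⟨hx.1, lt_of_le_of_lt hx.2 ht₂⟩))
    set M : ℝ := M₁ + (M₁ + max M₂ (M₁ + 1)) with hMdef
    have hM₁0 : 0 ≤ M₁ := le_trans (abs_nonneg _) (hM₁ α ⟨le_refl _, hαt₀.le⟩)
    have hsbd : ∀ t ∈ I, |s t| ≤ max M₂ (M₁ + 1) := by
      intro t ht
      rcases le_or_gt t t₂ with h | h
      · exact le_max_of_le_left (hM₂ t ⟨ht.1, h⟩)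
      · have hgt : |g t| < 1 := hsub ⟨lt_of_le_of_lt (le_max_left _ _) h, ht.2⟩
        have : |s t| ≤ |f t| + |g t| := by
          have : s t = f t - g t := by simp [hgdef]
          rw [this]; exact (abs_sub _ _).trans (by rfl)
        refine le_max_of_le_right ?_
        have := hfbd t ht
        linarith
    have hbbd : ∀ t ∈ I, |b t| ≤ M := by
      intro t ht
      have h1 := hfbd t ht
      have h2 := hsbd t ht
      calc |b t| ≤ |f t| + |s t| := abs_add_le _ _
        _ ≤ M := by rw [hMdef]; linarith
    have hM0 : 0 ≤ M := le_trans (abs_nonneg _) (hbbd α ⟨le_refl _, hαt₀⟩)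
    -- the primitive of b
    set B : ℝ → ℝ := fun t => ∫ x in α..t, b x with hBdef
    have hIm : MeasurableSet I := measurableSet_Ico
    have hbint : ∀ t ∈ I, IntervalIntegrable b volume α t := by
      intro t ht
      apply ContinuousOn.intervalIntegrable
      apply hbcont.mono
      rw [Set.uIcc_of_le ht.1]
      exact fun x hx => ⟨hx.1, lt_of_le_of_lt hx.2 ht.2⟩
    have hBd : ∀ t ∈ I, HasDerivWithinAt B (b t) I t := by
      intro t ht
      rcases eq_or_lt_of_le ht.1 with h | h
      · have hnh : nhdsWithin α (Set.Ici α) = nhdsWithin α (Set.Ico α t₀) :=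
          (nhdsWithin_Ico_eq_nhdsGE hαt₀).symm
        have hmemIoi : Set.Ico α t₀ ∈ nhdsWithin α (Set.Ioi α) :=
          Filter.mem_of_superset (Ioo_mem_nhdsGT_of_mem ⟨le_refl α, hαt₀⟩)
            Set.Ioo_subset_Ico_self
        have hmeas' : StronglyMeasurableAtFilter b (nhdsWithin α (Set.Ioi α)) volume :=
          ⟨Set.Ico α t₀, hmemIoi, hbcont.aestronglyMeasurable hIm⟩
        have hcw : ContinuousWithinAt b (Set.Ioi α) α :=
          ((hbcont α hαI).mono_of_mem_nhdsWithin hmemIoi :)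
        have := (intervalIntegral.integral_hasDerivWithinAt_right (f := b)
          (s := Set.Ici α) (t := Set.Ioi α) (hbint α hαI)
          hmeas' hcw).mono (Set.Ico_subset_Ici_self : Set.Ico α t₀ ⊆ Set.Ici α)
        rw [← h]
        exact this
      · have hmem : I ∈ nhds t := by
          rw [hI]
          exact Ico_mem_nhds h ht.2
        have hca : ContinuousAt b t := (hbcont t ht).continuousAt hmem
        have hmeas : StronglyMeasurableAtFilter b (nhds t) volume :=
          ⟨I, hmem, hbcont.aestronglyMeasurable hIm⟩
        exact (intervalIntegral.integral_hasDerivAt_right (hbint t ht)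
          hmeas hca).hasDerivWithinAt
    have hBcont : ContinuousOn B I := fun t ht => (hBd t ht).continuousWithinAt
    -- the integrating-factor function
    set h : ℝ → ℝ := fun t => g t * Real.exp (B t) with hhdef
    have hhcont : ContinuousOn h I := hgcont.mul (Real.continuous_exp.comp_continuousOn hBcont)
    have hmono : MonotoneOn h I := by
      apply monotoneOn_of_hasDerivWithinAt_nonneg (convex_Ico α t₀) hhcont
        (f' := fun t => (r t - 1) * Real.exp (B t))
      · intro t ht
        rw [interior_Ico] at ht
        have htI : t ∈ I := Set.Ioo_subset_Ico_self ht
        have hmem : I ∈ nhds t := Ico_mem_nhds ht.1 ht.2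
        have hgat : HasDerivAt g (-(f t + s t) * g t + (r t - 1)) t :=
          (hg t htI).hasDerivAt hmem
        have hBat : HasDerivAt B (b t) t := (hBd t htI).hasDerivAt hmem
        have hexp : HasDerivAt (fun u => Real.exp (B u)) (Real.exp (B t) * b t) t := by
          exact (Real.hasDerivAt_exp (B t)).comp t hBat
        have := hgat.mul hexp
        have heq : (-(f t + s t) * g t + (r t - 1)) * Real.exp (B t)
            + g t * (Real.exp (B t) * b t) = (r t - 1) * Real.exp (B t) := by
          simp only [hbdef]; ring
        rw [heq] at this
        exact this.hasDerivWithinAt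
      · intro t ht
        rw [interior_Ico] at ht
        have htI : t ∈ I := Set.Ioo_subset_Ico_self ht
        have := hr t htI
        exact mul_nonneg (by linarith) (Real.exp_pos _).le
    have hBα : B α = 0 := by simp [hBdef]
    have hhα : h α = g α := by simp [hhdef, hBα]
    -- exponential bound
    set K : ℝ := Real.exp (M * (t₀ - α)) with hKdef
    have hK0 : 0 < K := Real.exp_pos _
    have hBbd : ∀ t ∈ I, Real.exp (B t) ≤ K := by
      intro t ht
      apply Real.exp_le_exp.mpr
      have h1 : |B t| ≤ M * |t - α| := by
        have : ‖∫ x in α..t, b x‖ ≤ M * |t - α| := by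
          apply intervalIntegral.norm_integral_le_of_norm_le_const
          intro x hx
          rw [Set.uIoc_of_le ht.1] at hx
          simpa [Real.norm_eq_abs] using hbbd x ⟨hx.1.le, lt_of_le_of_lt hx.2 ht.2⟩
        simpa [Real.norm_eq_abs] using this
      have h2 : |t - α| ≤ t₀ - α := by
        rw [abs_of_nonneg (by linarith [ht.1])]
        linarith [ht.2]
      have := (le_abs_self (B t)).trans h1
      nlinarith
    -- lower bound on g
    have hglb : ∀ t ∈ I, g α / K ≤ g t := by
      intro t ht
      have h1 : g α ≤ h t := hhα ▸ hmono ⟨le_refl _, hαt₀⟩ ht ht.1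
      have h1' : g α ≤ g t * Real.exp (B t) := h1
      have h2 : Real.exp (B t) ≤ K := hBbd t ht
      have h3 : 0 < Real.exp (B t) := Real.exp_pos _
      rw [div_le_iff₀ hK0]
      have hgt0 : 0 < g t := by
        by_contra hneg
        push_neg at hneg
        nlinarith [mul_nonneg (neg_nonneg.2 hneg) h3.le]
      nlinarith [mul_le_mul_of_nonneg_left h2 hgt0.le]
    -- contradiction with the limit
    have hpos : 0 < g α / K := div_pos hgα hK0
    have hev2 : ∀ᶠ t in nhdsWithin t₀ (Set.Iio t₀), |g t| < g α / K := by
      have := hlim (Metric.ball_mem_nhds 0 hpos)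
      filter_upwards [this] with t ht
      simpa [Real.dist_eq] using ht
    have hev3 : ∀ᶠ t in nhdsWithin t₀ (Set.Iio t₀), t ∈ I := by
      filter_upwards [Ioo_mem_nhdsLT_of_mem (Set.mem_Ioc.mpr ⟨hαt₀, le_refl _⟩)] with t ht
      exact Set.Ioo_subset_Ico_self ht
    obtain ⟨t, ht1, ht2⟩ := (hev2.and hev3).exists
    have hx1 : |g t| < g α / K := ht1
    have hx2 : g α / K ≤ g t := hglb t ht2
    have hgt : 0 < g t := lt_of_lt_of_le hpos hx2
    rw [abs_of_pos hgt] at hx1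
    exact absurd hx2 (not_le.mpr hx1)
  · rw [hfc α hαI]
    exact cot_lt_cot_aux (by linarith [hc.2]) (by linarith [hc.1]) (lt_of_lt_of_le hαt₀ ht₀)
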